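/- Let D be a distribution on ℝᵈ such that for every (possibly randomized) classifier f : ℝᵈ → Y, the smoothed classifier g(·; D, f) is (A, δ)-robust for a set A ⊆ ℝᵈ. Then for every v ∈ A, tv(D, D + v) ≤ δ. -/

import Mathlib

open MeasureTheory

attribute [local instance] Classical.propDecidable

/-- Total variation distance between two measures. -/
noncomputable def tv {α : Type*} [MeasurableSpace α] (P Q : Measure α) : ℝ :=
  ⨆ A : {s : Set α // MeasurableSet s}, |(P A.1).toReal - (Q A.1).toReal|

/-- The score of class `y` at point `x` for the smoothing distribution `D` and
(randomized) base classifier `f`: the probability that `f(x + η) = y` for `η ~ D`. -/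
noncomputable def score {d : ℕ} {Y : Type} (D : Measure (EuclideanSpace ℝ (Fin d)))
    (f : EuclideanSpace ℝ (Fin d) → PMF Y) (y : Y) (x : EuclideanSpace ℝ (Fin d)) : ENNReal :=
  ∫⁻ η, f (x + η) y ∂D

/-- The smoothed classifier: outputs the class with the highest score, breaking
ties lexicographically (i.e. choosing the least maximizer). -/
noncomputable def gOut {d : ℕ} {Y : Type} [Fintype Y] [LinearOrder Y] [Nonempty Y]
    (D : Measure (EuclideanSpace ℝ (Fin d))) (f : EuclideanSpace ℝ (Fin d) → PMF Y)
    (x : EuclideanSpace ℝ (Fin d)) : Y :=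
  (Finset.univ.filter fun a : Y => ∀ y : Y, score D f y x ≤ score D f a x).min' (by
    obtain ⟨a, -, ha⟩ := Finset.exists_max_image (Finset.univ : Finset Y)
      (fun y => score D f y x) ⟨Classical.arbitrary Y, Finset.mem_univ _⟩
    exact ⟨a, Finset.mem_filter.mpr ⟨Finset.mem_univ _, fun y => ha y (Finset.mem_univ _)⟩⟩)

/-- The gap between the highest score and the runner-up score at `x`. -/
noncomputable def gap {d : ℕ} {Y : Type} [Fintype Y] [LinearOrder Y] [Nonempty Y]
    (D : Measure (EuclideanSpace ℝ (Fin d))) (f : EuclideanSpace ℝ (Fin d) → PMF Y)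
    (x : EuclideanSpace ℝ (Fin d)) : ENNReal :=
  score D f (gOut D f x) x - ⨆ y : {y : Y // y ≠ gOut D f x}, score D f y.1 x

/-- `(A, δ)`-robustness of the smoothed classifier. -/
def Robust {d : ℕ} {Y : Type} [Fintype Y] [LinearOrder Y] [Nonempty Y]
    (D : Measure (EuclideanSpace ℝ (Fin d))) (A : Set (EuclideanSpace ℝ (Fin d))) (δ : ℝ)
    (f : EuclideanSpace ℝ (Fin d) → PMF Y) : Prop :=
  ∀ x v, v ∈ A → ENNReal.ofReal δ < gap D f x → gOut D f (x + v) = gOut D f x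

open scoped ENNReal

theorem stmt9 {d : ℕ} {Y : Type} [Fintype Y] [LinearOrder Y] [Nontrivial Y]
    (D : Measure (EuclideanSpace ℝ (Fin d))) [IsProbabilityMeasure D]
    (A : Set (EuclideanSpace ℝ (Fin d))) (δ : ℝ) (hδ0 : 0 ≤ δ) (hδ1 : δ ≤ 1)
    (hrob : ∀ f : EuclideanSpace ℝ (Fin d) → PMF Y, Robust D A δ f) :
    ∀ v ∈ A, tv D (D.map (· + v)) ≤ δ := by
  intro v hv
  have hmeas : Measurable (· + v : EuclideanSpace ℝ (Fin d) → EuclideanSpace ℝ (Fin d)) :=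
    measurable_add_const v
  set Q := D.map (· + v) with hQdef
  have hQprob : IsProbabilityMeasure Q := Measure.isProbabilityMeasure_map hmeas.aemeasurable
  -- Key pointwise bound
  have key : ∀ S : Set (EuclideanSpace ℝ (Fin d)), MeasurableSet S →
      (D S).toReal - (Q S).toReal ≤ δ := by
    intro S hS
    by_contra hcon
    push_neg at hcon
    obtain ⟨y1, y0, hy⟩ : ∃ a b : Y, a < b := by
      obtain ⟨a, b, hab⟩ := exists_pair_ne Y
      rcases hab.lt_or_gt with h | h
      exacts [⟨a, b, h⟩, ⟨b, a, h⟩]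
    set P := D S with hPdef
    set Qv := Q S with hQvdef
    have hQv1 : Qv ≤ 1 := prob_le_one
    have hP1 : P ≤ 1 := prob_le_one
    have hQvt : Qv ≠ ∞ := (hQv1.trans_lt ENNReal.one_lt_top).ne
    have hPt : P ≠ ∞ := (hP1.trans_lt ENNReal.one_lt_top).ne
    have h1mQt : (1 : ℝ≥0∞) - Qv ≠ ∞ := (tsub_le_self.trans_lt ENNReal.one_lt_top).ne
    set I : EuclideanSpace ℝ (Fin d) → ℝ≥0∞ := S.indicator 1 with hIdef
    set a : EuclideanSpace ℝ (Fin d) → ℝ≥0∞ := fun z => (I z + (1 - Qv)) / 2 with hadef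
    have haI : ∀ z, I z ≤ 1 := by
      intro z
      rw [hIdef, Set.indicator_apply]
      split <;> simp
    have ha1 : ∀ z, a z ≤ 1 := by
      intro z
      have h2 : I z + (1 - Qv) ≤ 2 := by
        calc I z + (1 - Qv) ≤ 1 + 1 := add_le_add (haI z) tsub_le_self
        _ = 2 := one_add_one_eq_two
      calc a z ≤ 2 / 2 := ENNReal.div_le_div_right h2 2
      _ = 1 := ENNReal.div_self (by norm_num) (by norm_num)
    set w : EuclideanSpace ℝ (Fin d) → Y → ℝ≥0∞ :=
      fun z y => (if y = y0 then a z else 0) + (if y = y1 then 1 - a z else 0) with hwdef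
    have hsum : ∀ z, ∑ y, w z y = 1 := by
      intro z
      rw [hwdef]
      rw [Finset.sum_add_distrib, Finset.sum_ite_eq' Finset.univ y0 (fun _ => a z),
        Finset.sum_ite_eq' Finset.univ y1 (fun _ => 1 - a z)]
      simp only [Finset.mem_univ, if_true]
      exact add_tsub_cancel_of_le (ha1 z)
    set f : EuclideanSpace ℝ (Fin d) → PMF Y := fun z => PMF.ofFintype (w z) (hsum z) with hfdef
    have hfy0 : ∀ z, f z y0 = a z := by
      intro z
      show w z y0 = a z
      simp [hwdef, hy.ne']
    have hfy1 : ∀ z, f z y1 = 1 - a z := by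
      intro z
      show w z y1 = 1 - a z
      simp [hwdef, hy.ne]
    have hfother : ∀ y, y ≠ y0 → y ≠ y1 → ∀ z, f z y = 0 := by
      intro y h0 h1 z
      show w z y = 0
      simp [hwdef, h0, h1]
    have hIm : Measurable I := measurable_const.indicator hS
    have ham : Measurable a := (hIm.add_const _).div_const 2
    -- score of y0
    have scoreY0 : ∀ x, score D f y0 x = (D ((x + ·)⁻¹' S) + (1 - Qv)) / 2 := by
      intro x
      have hpre : MeasurableSet ((x + ·)⁻¹' S) := hS.preimage (measurable_const_add x)
      calc score D f y0 x
          = ∫⁻ η, (Set.indicator ((x + ·)⁻¹' S) 1 η + (1 - Qv)) * 2⁻¹ ∂D := by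
            refine lintegral_congr fun η => ?_
            rw [hfy0, hadef]
            simp only [div_eq_mul_inv]
            congr 2
        _ = (D ((x + ·)⁻¹' S) + (1 - Qv)) / 2 := by
            rw [lintegral_mul_const' 2⁻¹ _ (by simp), lintegral_add_right _ measurable_const,
              lintegral_const, measure_univ, mul_one, lintegral_indicator hpre]
            simp only [Pi.one_apply]
            rw [setLIntegral_one, div_eq_mul_inv]
    have scoreY0_0 : score D f y0 0 = (P + (1 - Qv)) / 2 := by
      rw [scoreY0]
      congr 2
      · congr 1
        ext z
        simp
    have scoreY0_v : score D f y0 v = 1 / 2 := by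
      rw [scoreY0]
      have hset : ((v + ·)⁻¹' S) = ((· + v)⁻¹' S) := by
        ext z; simp [add_comm]
      rw [hset, ← Measure.map_apply hmeas hS, ← hQdef, ← hQvdef,
        add_tsub_cancel_of_le hQv1]
    -- score of y1
    have scoreY1 : ∀ x, score D f y1 x = 1 - score D f y0 x := by
      intro x
      have hfeq : (fun η => (f (x + η)) y0) = fun η => a (x + η) :=
        funext fun η => hfy0 _
      have hmg : Measurable fun η => (f (x + η)) y0 := by
        rw [hfeq]; exact ham.comp (measurable_const_add x)
      have hfin : ∫⁻ η, (f (x + η)) y0 ∂D ≠ ∞ := by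
        have hb : ∫⁻ η, (f (x + η)) y0 ∂D ≤ ∫⁻ _, (1 : ℝ≥0∞) ∂D :=
          lintegral_mono fun η => PMF.coe_le_one _ _
        refine (hb.trans_lt ?_).ne
        rw [lintegral_one, measure_univ]
        exact ENNReal.one_lt_top
      have hle : (fun η => (f (x + η)) y0) ≤ᵐ[D] fun _ => 1 :=
        Filter.Eventually.of_forall fun η => PMF.coe_le_one _ _
      calc score D f y1 x = ∫⁻ η, (1 : ℝ≥0∞) - (f (x + η)) y0 ∂D := by
            refine lintegral_congr fun η => ?_
            rw [hfy1, hfy0]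
        _ = (∫⁻ _, (1 : ℝ≥0∞) ∂D) - ∫⁻ η, (f (x + η)) y0 ∂D :=
            lintegral_sub hmg hfin hle
        _ = 1 - score D f y0 x := by
            rw [lintegral_one, measure_univ, score]
    have scoreOther : ∀ y, y ≠ y0 → y ≠ y1 → ∀ x, score D f y x = 0 := by
      intro y h0 h1 x
      rw [score]
      simp [hfother y h0 h1]
    -- numeric facts
    have hq0 : (0:ℝ) ≤ (Q S).toReal := ENNReal.toReal_nonneg
    have hP' : ENNReal.ofReal δ + Qv < P := by
      have hlt : ENNReal.ofReal (δ + (Q S).toReal) < ENNReal.ofReal ((D S).toReal) :=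
        (ENNReal.ofReal_lt_ofReal_iff
          (lt_of_le_of_lt (add_nonneg hδ0 hq0) (by linarith))).mpr (by linarith)
      rwa [ENNReal.ofReal_add hδ0 hq0, ENNReal.ofReal_toReal hQvt,
        ENNReal.ofReal_toReal hPt] at hlt
    have hQvP : Qv < P := (le_add_self).trans_lt hP'
    set c : ℝ≥0∞ := P + (1 - Qv) with hcdef
    have hc1 : 1 < c := by
      calc (1:ℝ≥0∞) = Qv + (1 - Qv) := (add_tsub_cancel_of_le hQv1).symm
      _ < P + (1 - Qv) := ENNReal.add_lt_add_right h1mQt hQvP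
    have hc2 : c ≤ 2 := by
      calc c ≤ 1 + 1 := add_le_add hP1 tsub_le_self
      _ = 2 := one_add_one_eq_two
    have hchalf1 : c / 2 ≤ 1 := ENNReal.div_le_of_le_mul (by rwa [one_mul])
    have hchalft : c / 2 ≠ ∞ := (hchalf1.trans_lt ENNReal.one_lt_top).ne
    have hhalf_lt : (1:ℝ≥0∞) / 2 < c / 2 := by
      rw [div_eq_mul_inv, div_eq_mul_inv]
      exact ENNReal.mul_lt_mul_left (by simp) (by simp) hc1
    have h_other_lt : ∀ y, y ≠ y0 → score D f y 0 < score D f y0 0 := by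
      intro y hne
      rcases eq_or_ne y y1 with rfl | hne1
      · rw [scoreY1, scoreY0_0]
        calc 1 - c / 2 ≤ 1 - 1 / 2 := tsub_le_tsub_left hhalf_lt.le 1
        _ = 1 / 2 := ENNReal.sub_half ENNReal.one_ne_top
        _ < c / 2 := hhalf_lt
      · rw [scoreOther y hne hne1, scoreY0_0]
        exact ENNReal.div_pos (by positivity) (by simp)
    have hy0mem : y0 ∈ Finset.univ.filter fun b : Y => ∀ y : Y, score D f y 0 ≤ score D f b 0 := by
      refine Finset.mem_filter.mpr ⟨Finset.mem_univ _, fun y => ?_⟩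
      rcases eq_or_ne y y0 with rfl | hne
      · exact le_rfl
      · exact (h_other_lt y hne).le
    have hg0 : gOut D f 0 = y0 := by
      refine le_antisymm (Finset.min'_le _ _ hy0mem) ?_
      apply Finset.le_min'
      intro y hyf
      by_contra hlt
      push_neg at hlt
      have hne : y ≠ y0 := ne_of_lt hlt
      have := (Finset.mem_filter.mp hyf).2 y0
      exact absurd this (not_le.mpr (h_other_lt y hne))
    have hgap : ENNReal.ofReal δ < gap D f 0 := by
      rw [gap, hg0]
      have hsup_le : (⨆ y : {y : Y // y ≠ y0}, score D f y.1 0) ≤ 1 - c / 2 := by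
        refine iSup_le fun y => ?_
        rcases eq_or_ne y.1 y1 with h | h
        · rw [h, scoreY1, scoreY0_0]
        · rw [scoreOther y.1 y.2 h]
          exact zero_le
      have hδ1lt : ENNReal.ofReal δ + 1 < c := by
        calc ENNReal.ofReal δ + 1 = ENNReal.ofReal δ + (Qv + (1 - Qv)) := by
              rw [add_tsub_cancel_of_le hQv1]
        _ = (ENNReal.ofReal δ + Qv) + (1 - Qv) := (add_assoc _ _ _).symm
        _ < P + (1 - Qv) := ENNReal.add_lt_add_right h1mQt hP'
      have hkey : ENNReal.ofReal δ + (1 - c / 2) < c / 2 := by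
        rw [← ENNReal.add_lt_add_iff_right hchalft]
        calc ENNReal.ofReal δ + (1 - c / 2) + c / 2
            = ENNReal.ofReal δ + ((1 - c / 2) + c / 2) := add_assoc _ _ _
          _ = ENNReal.ofReal δ + 1 := by rw [tsub_add_cancel_of_le hchalf1]
          _ < c := hδ1lt
          _ = c / 2 + c / 2 := (ENNReal.add_halves c).symm
      calc ENNReal.ofReal δ < c / 2 - (1 - c / 2) := lt_tsub_iff_right.mpr hkey
      _ ≤ c / 2 - ⨆ y : {y : Y // y ≠ y0}, score D f y.1 0 := tsub_le_tsub_left hsup_le _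
      _ = score D f y0 0 - ⨆ y : {y : Y // y ≠ y0}, score D f y.1 0 := by
          rw [scoreY0_0]
    have hrv := hrob f 0 v hv hgap
    rw [zero_add, hg0] at hrv
    have hy1mem : y1 ∈ Finset.univ.filter fun b : Y => ∀ y : Y, score D f y v ≤ score D f b v := by
      refine Finset.mem_filter.mpr ⟨Finset.mem_univ _, fun y => ?_⟩
      have hs1 : score D f y1 v = 1 / 2 := by
        rw [scoreY1, scoreY0_v, ENNReal.sub_half ENNReal.one_ne_top]
      rcases eq_or_ne y y0 with rfl | h0
      · rw [scoreY0_v, hs1]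
      rcases eq_or_ne y y1 with rfl | h1
      · exact le_rfl
      · rw [scoreOther y h0 h1]
        exact zero_le
    have hle : gOut D f v ≤ y1 := Finset.min'_le _ _ hy1mem
    exact absurd hrv (ne_of_lt (lt_of_le_of_lt hle hy))
  -- conclude the tv bound
  haveI : Nonempty {s : Set (EuclideanSpace ℝ (Fin d)) // MeasurableSet s} :=
    ⟨⟨∅, MeasurableSet.empty⟩⟩
  refine ciSup_le ?_
  rintro ⟨S, hS⟩
  rw [abs_sub_le_iff]
  refine ⟨key S hS, ?_⟩
  have h1 := key Sᶜ hS.compl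
  have hD : (D Sᶜ).toReal = 1 - (D S).toReal := by
    rw [measure_compl hS (measure_ne_top _ _), measure_univ,
      ENNReal.toReal_sub_of_le prob_le_one ENNReal.one_ne_top, ENNReal.toReal_one]
  have hQ : (Q Sᶜ).toReal = 1 - (Q S).toReal := by
    rw [measure_compl hS (measure_ne_top _ _), measure_univ,
      ENNReal.toReal_sub_of_le prob_le_one ENNReal.one_ne_top, ENNReal.toReal_one]
  rw [hD, hQ] at h1
  linarith
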